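/- Let f, g be complex polynomials in p variables of degrees m and q respectively, and suppose log f is an analytic branch of the logarithm of f on an open set U ⊆ ℂ^p. Then for each multi-index L, the partial derivative ∂_L( g(x) f(x)^{-s} ) equals ∑_{ν=0}^{|L|} (∏_{j=0}^{ν-1}(s+j)) P_{L,ν}(x) f(x)^{-(s+ν)}, where each P_{L,ν} is a polynomial in x independent of s, of degree at most q + mν - |L|, and P_{L,ν} = 0 whenever q + mν - |L| < 0. -/

import Mathlib

open MvPolynomial

/-- Partial derivative in the `i`-th coordinate direction of a function on `ℂ^p`. -/
noncomputable def pderivCoord (p : ℕ) (i : Fin p) (F : (Fin p → ℂ) → ℂ) :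
    (Fin p → ℂ) → ℂ :=
  fun x => fderiv ℂ F x (Pi.single i 1)

/-- The multi-index partial derivative `∂_L = ∂^{|L|}/(∂x_1^{L_1} ⋯ ∂x_p^{L_p})`. -/
noncomputable def pderivMulti (p : ℕ) (L : Fin p → ℕ) (F : (Fin p → ℂ) → ℂ) :
    (Fin p → ℂ) → ℂ :=
  (List.finRange p).foldr (fun i G => (pderivCoord p i)^[L i] G) F

lemma coeff_pderiv' {n : ℕ} (i : Fin n) (d : (Fin n) →₀ ℕ) (P : MvPolynomial (Fin n) ℂ) :
    coeff d (pderiv i P) = ((d i : ℂ) + 1) * coeff (d + Finsupp.single i 1) P := by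
  induction P using MvPolynomial.induction_on' with
  | monomial s a =>
    classical
    rw [pderiv_monomial, coeff_monomial, coeff_monomial]
    by_cases hs : s = d + Finsupp.single i 1
    · subst hs
      have h1 : d + Finsupp.single i 1 - Finsupp.single i 1 = d :=
        add_tsub_cancel_right d (Finsupp.single i 1)
      have h2 : ((d + Finsupp.single i 1 : (Fin n) →₀ ℕ)) i = d i + 1 := by
        simp [Finsupp.add_apply]
      rw [if_pos h1, h2, if_pos rfl]
      push_cast; ring
    · rw [if_neg hs]
      by_cases h1 : s - Finsupp.single i 1 = d
      · have h1' : ∀ j, s j - (Finsupp.single i 1) j = d j := by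
          intro j
          rw [← h1, Finsupp.tsub_apply]
        have hsi : s i = 0 := by
          by_contra h
          apply hs
          apply Finsupp.ext
          intro j
          have hj' := h1' j
          rw [Finsupp.add_apply]
          rcases eq_or_ne j i with rfl | hj
          · rw [Finsupp.single_eq_same] at hj' ⊢
            omega
          · rw [Finsupp.single_eq_of_ne hj] at hj' ⊢
            omega
        rw [if_pos h1, hsi]
        simp
      · rw [if_neg h1]; ring
  | add p q hp hq => simp [hp, hq]; ring

lemma totalDegree_pderiv_succ_le {n : ℕ} (i : Fin n) (P : MvPolynomial (Fin n) ℂ)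
    (h : pderiv i P ≠ 0) : (pderiv i P).totalDegree + 1 ≤ P.totalDegree := by
  have key : ∀ d ∈ (pderiv i P).support, (d.sum fun _ e => e) + 1 ≤ P.totalDegree := by
    intro d hd
    rw [MvPolynomial.mem_support_iff, coeff_pderiv'] at hd
    have hmem : (d + Finsupp.single i 1) ∈ P.support := by
      rw [MvPolynomial.mem_support_iff]
      intro h0
      rw [h0, mul_zero] at hd
      exact hd rfl
    have hle := MvPolynomial.le_totalDegree hmem
    have hsum : ((d + Finsupp.single i 1 : (Fin n) →₀ ℕ)).sum (fun _ e => e)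
        = (d.sum fun _ e => e) + 1 := by
      rw [Finsupp.sum_add_index' (fun _ => rfl) (fun _ b c => rfl)]
      rw [Finsupp.sum_single_index rfl]
    omega
  obtain ⟨d0, hd0⟩ := (MvPolynomial.support_nonempty).mpr h
  have h1 : 1 ≤ P.totalDegree := le_trans (by omega) (key d0 hd0)
  have h2 : (pderiv i P).totalDegree ≤ P.totalDegree - 1 := by
    rw [MvPolynomial.totalDegree]
    apply Finset.sup_le
    intro d hd
    have := key d hd
    omega
  omega

lemma hasFDerivAt_eval {n : ℕ} (P : MvPolynomial (Fin n) ℂ) (x : Fin n → ℂ) :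
    HasFDerivAt (fun y => eval y P)
      (∑ j : Fin n, eval x (pderiv j P) • (ContinuousLinearMap.proj j : (Fin n → ℂ) →L[ℂ] ℂ)) x := by
  induction P using MvPolynomial.induction_on with
  | C a =>
    have key : (∑ j : Fin n, eval x (pderiv j (C a : MvPolynomial (Fin n) ℂ)) • (ContinuousLinearMap.proj j : (Fin n → ℂ) →L[ℂ] ℂ))
        = 0 := by
      refine ContinuousLinearMap.ext fun v => ?_
      simp [pderiv_C]
    rw [key]
    simp only [eval_C]
    exact hasFDerivAt_const (𝕜 := ℂ) a x
  | add p q hp hq =>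
    have h := hp.add hq
    have key : (∑ j : Fin n, eval x (pderiv j (p + q)) • (ContinuousLinearMap.proj j : (Fin n → ℂ) →L[ℂ] ℂ))
        = (∑ j : Fin n, eval x (pderiv j p) • (ContinuousLinearMap.proj j : (Fin n → ℂ) →L[ℂ] ℂ))
          + ∑ j : Fin n, eval x (pderiv j q) • (ContinuousLinearMap.proj j : (Fin n → ℂ) →L[ℂ] ℂ) := by
      refine ContinuousLinearMap.ext fun v => ?_
      simp only [ContinuousLinearMap.sum_apply, ContinuousLinearMap.add_apply,
        ContinuousLinearMap.smul_apply, ContinuousLinearMap.proj_apply, smul_eq_mul,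
        map_add, add_mul, Finset.sum_add_distrib]
    rw [key]
    simp only [map_add]
    exact h
  | mul_X p i hp =>
    classical
    have hxi : HasFDerivAt (fun y : Fin n → ℂ => y i)
        (ContinuousLinearMap.proj i : (Fin n → ℂ) →L[ℂ] ℂ) x :=
      (ContinuousLinearMap.proj i : (Fin n → ℂ) →L[ℂ] ℂ).hasFDerivAt
    have h := hp.mul hxi
    have key : (∑ j : Fin n, eval x (pderiv j (p * X i)) • (ContinuousLinearMap.proj j : (Fin n → ℂ) →L[ℂ] ℂ))
        = eval x p • (ContinuousLinearMap.proj i : (Fin n → ℂ) →L[ℂ] ℂ)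
          + x i • ∑ j : Fin n, eval x (pderiv j p) • (ContinuousLinearMap.proj j : (Fin n → ℂ) →L[ℂ] ℂ) := by
      refine ContinuousLinearMap.ext fun v => ?_
      simp only [ContinuousLinearMap.sum_apply, ContinuousLinearMap.add_apply,
        ContinuousLinearMap.smul_apply, ContinuousLinearMap.proj_apply, smul_eq_mul]
      have hterm : ∀ j : Fin n, eval x (pderiv j (p * X i)) * v j
          = (if j = i then eval x p * v i else 0) + x i * (eval x (pderiv j p) * v j) := by
        intro j
        rw [pderiv_mul, map_add, eval_mul, eval_X]
        rcases eq_or_ne j i with rfl | hj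
        · rw [pderiv_X_self, if_pos rfl]
          simp; ring
        · rw [pderiv_X_of_ne (Ne.symm hj), if_neg hj]
          simp; ring
      rw [Finset.sum_congr rfl fun j _ => hterm j, Finset.sum_add_distrib,
        Finset.sum_ite_eq' Finset.univ i, ← Finset.mul_sum]
      simp
    rw [key]
    have hfun : (fun y => eval y (p * X i)) = fun y => eval y p * y i := by
      funext y; rw [eval_mul, eval_X]
    rw [hfun]
    exact h

lemma clm_sum_proj_apply {n : ℕ} (a : Fin n → ℂ) (i : Fin n) :
    (∑ j : Fin n, a j • (ContinuousLinearMap.proj j : (Fin n → ℂ) →L[ℂ] ℂ)) (Pi.single i 1)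
      = a i := by
  classical
  rw [ContinuousLinearMap.sum_apply]
  have : ∀ j : Fin n, (a j • (ContinuousLinearMap.proj j : (Fin n → ℂ) →L[ℂ] ℂ)) (Pi.single i 1)
      = if j = i then a j else 0 := by
    intro j
    rw [ContinuousLinearMap.smul_apply, ContinuousLinearMap.proj_apply, smul_eq_mul,
      Pi.single_apply]
    rcases eq_or_ne j i with rfl | hj
    · simp
    · simp [hj, Ne.symm hj]
  rw [Finset.sum_congr rfl fun j _ => this j, Finset.sum_ite_eq' Finset.univ i]
  simp

lemma pderiv_good {n : ℕ} (i : Fin n) (Q : MvPolynomial (Fin n) ℂ) (b : ℤ)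
    (h1 : b < 0 → Q = 0) (h2 : Q = 0 ∨ (Q.totalDegree : ℤ) ≤ b) :
    (b - 1 < 0 → pderiv i Q = 0) ∧
      (pderiv i Q = 0 ∨ ((pderiv i Q).totalDegree : ℤ) ≤ b - 1) := by
  by_cases hz : pderiv i Q = 0
  · exact ⟨fun _ => hz, Or.inl hz⟩
  · have hQ : Q ≠ 0 := by
      intro h; exact hz (by rw [h, map_zero])
    have hdQ : (Q.totalDegree : ℤ) ≤ b := h2.resolve_left hQ
    have hlt := totalDegree_pderiv_succ_le i Q hz
    refine ⟨fun hb => ?_, Or.inr ?_⟩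
    · exfalso; omega
    · omega

lemma sub_good {n : ℕ} (A B : MvPolynomial (Fin n) ℂ) (b : ℤ)
    (hA1 : b < 0 → A = 0) (hA2 : A = 0 ∨ (A.totalDegree : ℤ) ≤ b)
    (hB1 : b < 0 → B = 0) (hB2 : B = 0 ∨ (B.totalDegree : ℤ) ≤ b) :
    (b < 0 → A - B = 0) ∧ (A - B = 0 ∨ ((A - B).totalDegree : ℤ) ≤ b) := by
  constructor
  · intro hb; rw [hA1 hb, hB1 hb, sub_zero]
  · by_cases hb : b < 0
    · left; rw [hA1 hb, hB1 hb, sub_zero]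
    · right
      push_neg at hb
      have hdA : (A.totalDegree : ℤ) ≤ b := by
        rcases hA2 with h | h
        · rw [h]; simpa using hb
        · exact h
      have hdB : (B.totalDegree : ℤ) ≤ b := by
        rcases hB2 with h | h
        · rw [h]; simpa using hb
        · exact h
      have := MvPolynomial.totalDegree_sub A B
      have hmax : ((max A.totalDegree B.totalDegree : ℕ) : ℤ) ≤ b := by
        rcases max_cases A.totalDegree B.totalDegree with ⟨he, _⟩ | ⟨he, _⟩ <;> rw [he] <;> assumption
      omega

lemma step_lemma (p m q t : ℕ) (f : MvPolynomial (Fin p) ℂ)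
    (hf : f.totalDegree = m)
    (U : Set (Fin p → ℂ)) (hU : IsOpen U)
    (logf : (Fin p → ℂ) → ℂ) (hlog : AnalyticOnNhd ℂ logf U)
    (hexp : ∀ x ∈ U, Complex.exp (logf x) = MvPolynomial.eval x f)
    (i : Fin p) (F : ℂ → (Fin p → ℂ) → ℂ)
    (P : ℕ → MvPolynomial (Fin p) ℂ)
    (hP0 : ∀ ν : ℕ, t < ν → P ν = 0)
    (hPneg : ∀ ν : ℕ, ((q : ℤ) + m * ν - t < 0) → P ν = 0)
    (hPdeg : ∀ ν : ℕ, P ν = 0 ∨ ((P ν).totalDegree : ℤ) ≤ (q : ℤ) + m * ν - t)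
    (hFeq : ∀ s : ℂ, ∀ x ∈ U, F s x = ∑ ν ∈ Finset.range (t + 1),
      (∏ j ∈ Finset.range ν, (s + (j : ℂ))) * eval x (P ν)
        * Complex.exp (-(s + (ν : ℂ)) * logf x)) :
    ∃ P' : ℕ → MvPolynomial (Fin p) ℂ,
      (∀ ν : ℕ, t + 1 < ν → P' ν = 0) ∧
      (∀ ν : ℕ, ((q : ℤ) + m * ν - (t + 1) < 0) → P' ν = 0) ∧
      (∀ ν : ℕ, P' ν = 0 ∨ ((P' ν).totalDegree : ℤ) ≤ (q : ℤ) + m * ν - (t + 1)) ∧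
      ∀ s : ℂ, ∀ x ∈ U, pderivCoord p i (F s) x = ∑ ν ∈ Finset.range (t + 1 + 1),
        (∏ j ∈ Finset.range ν, (s + (j : ℂ))) * eval x (P' ν)
          * Complex.exp (-(s + (ν : ℂ)) * logf x) := by
  classical
  set P' : ℕ → MvPolynomial (Fin p) ℂ := fun ν =>
    match ν with
    | 0 => pderiv i (P 0)
    | Nat.succ k => pderiv i (P (k + 1)) - P k * pderiv i f with hP'
  -- degree facts for `pderiv i f`
  have hdf : pderiv i f = 0 ∨ ((pderiv i f).totalDegree : ℤ) ≤ (m : ℤ) - 1 := by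
    by_cases h : pderiv i f = 0
    · exact Or.inl h
    · right
      have := totalDegree_pderiv_succ_le i f h
      rw [hf] at this
      omega
  -- the product terms
  have hprod : ∀ k : ℕ,
      ((q : ℤ) + m * (k + 1) - (t + 1) < 0 → P k * pderiv i f = 0) ∧
      (P k * pderiv i f = 0 ∨ (((P k * pderiv i f).totalDegree : ℤ))
        ≤ (q : ℤ) + m * (k + 1) - (t + 1)) := by
    intro k
    rcases hdf with h | h
    · rw [h, mul_zero]
      exact ⟨fun _ => rfl, Or.inl rfl⟩
    · have hm1 : (1 : ℤ) ≤ m := by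
        by_contra hm
        push_neg at hm
        have : (((pderiv i f).totalDegree : ℕ) : ℤ) ≥ 0 := Int.ofNat_nonneg _
        omega
      constructor
      · intro hb
        have : (q : ℤ) + m * k - t < 0 := by push_cast at hb ⊢; linarith
        rw [hPneg k this, zero_mul]
      · by_cases hk : P k = 0
        · left; rw [hk, zero_mul]
        · right
          have hdk : ((P k).totalDegree : ℤ) ≤ (q : ℤ) + m * k - t := (hPdeg k).resolve_left hk
          have hint : ((P k * pderiv i f).totalDegree : ℤ)
              ≤ ((P k).totalDegree : ℤ) + ((pderiv i f).totalDegree : ℤ) := by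
            exact_mod_cast MvPolynomial.totalDegree_mul (P k) (pderiv i f)
          push_cast
          linarith
  have hP'0 : ∀ ν : ℕ, t + 1 < ν → P' ν = 0 := by
    intro ν hν
    match ν with
    | Nat.succ k =>
      have h1 : P (k + 1) = 0 := hP0 (k + 1) (by omega)
      have h2 : P k = 0 := hP0 k (by omega)
      show pderiv i (P (k + 1)) - P k * pderiv i f = 0
      rw [h1, h2, map_zero, zero_mul, sub_zero]
  have hgood : ∀ ν : ℕ, (((q : ℤ) + m * ν - (t + 1) < 0) → P' ν = 0) ∧
      (P' ν = 0 ∨ ((P' ν).totalDegree : ℤ) ≤ (q : ℤ) + m * ν - (t + 1)) := by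
    intro ν
    match ν with
    | 0 =>
      have h := pderiv_good i (P 0) ((q : ℤ) + m * 0 - t) (by simpa using hPneg 0)
        (by simpa using hPdeg 0)
      constructor
      · intro hb
        exact h.1 (by push_cast at hb ⊢; omega)
      · rcases h.2 with h2 | h2
        · exact Or.inl h2
        · right
          show ((pderiv i (P 0)).totalDegree : ℤ) ≤ _
          push_cast at h2 ⊢
          omega
    | Nat.succ k =>
      have hA := pderiv_good i (P (k + 1)) ((q : ℤ) + m * (k + 1) - t)
        (hPneg (k + 1)) (hPdeg (k + 1))
      have hBfull := hprod k
      have hbeq : (q : ℤ) + m * (k + 1) - t - 1 = (q : ℤ) + m * (k + 1) - (t + 1) := by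
        push_cast; ring
      rw [hbeq] at hA
      have h := sub_good (pderiv i (P (k + 1))) (P k * pderiv i f)
        ((q : ℤ) + m * (k + 1) - (t + 1)) hA.1 hA.2 hBfull.1 hBfull.2
      have hshow : P' (k + 1) = pderiv i (P (k + 1)) - P k * pderiv i f := rfl
      rw [hshow]
      push_cast at h ⊢
      exact h
  refine ⟨P', hP'0, fun ν => (hgood ν).1, fun ν => (hgood ν).2, ?_⟩
  -- the analytic identity
  intro s x hx
  set l := logf x with hl
  have hlogd : HasFDerivAt logf (fderiv ℂ logf x) x :=
    (hlog x hx).differentiableAt.hasFDerivAt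
  set Dl := fderiv ℂ logf x with hDl
  set w : ℂ := Dl (Pi.single i 1) with hwdef
  set c : ℕ → ℂ := fun ν => ∏ j ∈ Finset.range ν, (s + (j : ℂ)) with hc
  set E : ℕ → ℂ := fun ν => Complex.exp (-(s + (ν : ℂ)) * l) with hE
  -- derivative of each summand
  have hterm : ∀ ν : ℕ, HasFDerivAt
      (fun y => c ν * eval y (P ν) * Complex.exp (-(s + (ν : ℂ)) * logf y))
      (c ν • (eval x (P ν) • (Complex.exp (-(s + (ν : ℂ)) * l) • ((-(s + (ν : ℂ))) • Dl))
        + Complex.exp (-(s + (ν : ℂ)) * l) •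
          (∑ j : Fin p, eval x (pderiv j (P ν)) •
            (ContinuousLinearMap.proj j : (Fin p → ℂ) →L[ℂ] ℂ)))) x := by
    intro ν
    have h1 : HasFDerivAt (fun y => Complex.exp (-(s + (ν : ℂ)) * logf y))
        (Complex.exp (-(s + (ν : ℂ)) * l) • ((-(s + (ν : ℂ))) • Dl)) x :=
      (hlogd.const_mul (-(s + (ν : ℂ)))).cexp
    have h2 := (hasFDerivAt_eval (P ν) x).mul h1
    have h3 := h2.const_mul (c ν)
    have hfun : (fun y => c ν * (eval y (P ν) * Complex.exp (-(s + (ν : ℂ)) * logf y)))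
        = fun y => c ν * eval y (P ν) * Complex.exp (-(s + (ν : ℂ)) * logf y) := by
      funext y; ring
    simp only [Pi.mul_apply] at h3
    rw [hfun] at h3
    exact h3
  have hsum := HasFDerivAt.sum (fun ν (_ : ν ∈ Finset.range (t + 1)) => hterm ν)
  have hEv : F s =ᶠ[nhds x]
      (fun y => ∑ ν ∈ Finset.range (t + 1),
        c ν * eval y (P ν) * Complex.exp (-(s + (ν : ℂ)) * logf y)) :=
    Filter.eventuallyEq_of_mem (hU.mem_nhds hx) (fun y hy => hFeq s y hy)
  have hder : fderiv ℂ (F s) x = ∑ ν ∈ Finset.range (t + 1),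
      (c ν • (eval x (P ν) • (Complex.exp (-(s + (ν : ℂ)) * l) • ((-(s + (ν : ℂ))) • Dl))
        + Complex.exp (-(s + (ν : ℂ)) * l) •
          (∑ j : Fin p, eval x (pderiv j (P ν)) •
            (ContinuousLinearMap.proj j : (Fin p → ℂ) →L[ℂ] ℂ)))) := by
    rw [hEv.fderiv_eq]
    rw [← hsum.fderiv, Finset.sum_fn]
  -- the value of `w`
  have hfval : Complex.exp l = eval x f := hexp x hx
  have hfd : HasFDerivAt (fun y => eval y f) (Complex.exp l • Dl) x := by
    have h0 : HasFDerivAt (fun y => Complex.exp (logf y)) (Complex.exp l • Dl) x :=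
      hlogd.cexp
    exact h0.congr_of_eventuallyEq
      (Filter.eventuallyEq_of_mem (hU.mem_nhds hx) (fun y hy => (hexp y hy).symm))
  have huniq := hfd.unique (hasFDerivAt_eval f x)
  have hw : Complex.exp l * w = eval x (pderiv i f) := by
    have happ := congrArg (fun D : (Fin p → ℂ) →L[ℂ] ℂ => D (Pi.single i 1)) huniq
    simp only [ContinuousLinearMap.smul_apply, smul_eq_mul] at happ
    rw [clm_sum_proj_apply] at happ
    exact happ
  have hexpne := Complex.exp_ne_zero l
  have hwval : w = Complex.exp (-l) * eval x (pderiv i f) := by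
    rw [Complex.exp_neg, ← hw]
    field_simp
  -- compute the applied derivative
  have hval : pderivCoord p i (F s) x = ∑ ν ∈ Finset.range (t + 1),
      c ν * (eval x (P ν) * (E ν * ((-(s + (ν : ℂ))) * w))
        + E ν * eval x (pderiv i (P ν))) := by
    show fderiv ℂ (F s) x (Pi.single i 1) = _
    rw [hder, ContinuousLinearMap.sum_apply]
    refine Finset.sum_congr rfl fun ν _ => ?_
    rw [ContinuousLinearMap.smul_apply, ContinuousLinearMap.add_apply,
      ContinuousLinearMap.smul_apply, ContinuousLinearMap.smul_apply,
      ContinuousLinearMap.smul_apply, ContinuousLinearMap.smul_apply,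
      clm_sum_proj_apply]
    simp only [smul_eq_mul]
    rfl
  rw [hval]
  -- now pure algebra
  have hEstep : ∀ k : ℕ, E k * Complex.exp (-l) = E (k + 1) := by
    intro k
    rw [hE]
    simp only []
    rw [← Complex.exp_add]
    congr 1
    push_cast
    ring
  set A : ℕ → ℂ := fun ν => c ν * E ν * eval x (pderiv i (P ν)) with hA
  set B : ℕ → ℂ := fun k => -(c (k + 1) * eval x (P k) * eval x (pderiv i f) * E (k + 1))
    with hB
  have expand : ∀ ν : ℕ,
      c ν * (eval x (P ν) * (E ν * ((-(s + (ν : ℂ))) * w)) + E ν * eval x (pderiv i (P ν)))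
        = A ν + B ν := by
    intro ν
    rw [hwval, hA, hB]
    simp only []
    rw [← hEstep ν, hc]
    simp only []
    rw [Finset.prod_range_succ]
    ring
  rw [Finset.sum_congr rfl fun ν _ => expand ν, Finset.sum_add_distrib]
  -- RHS
  set T : ℕ → ℂ := fun ν => c ν * eval x (P' ν) * E ν with hT
  show (∑ ν ∈ Finset.range (t + 1), A ν) + ∑ ν ∈ Finset.range (t + 1), B ν
    = ∑ ν ∈ Finset.range (t + 1 + 1), T ν
  have hT0 : T 0 = A 0 := by
    rw [hT, hA]
    simp only []
    have : P' 0 = pderiv i (P 0) := rfl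
    rw [this]
    ring
  have hTsucc : ∀ k : ℕ, T (k + 1) = A (k + 1) + B k := by
    intro k
    rw [hT, hA, hB]
    simp only []
    have : P' (k + 1) = pderiv i (P (k + 1)) - P k * pderiv i f := rfl
    rw [this, map_sub, eval_mul]
    ring
  have hAtop : A (t + 1) = 0 := by
    rw [hA]
    simp only []
    rw [hP0 (t + 1) (by omega), map_zero, map_zero, mul_zero]
  rw [Finset.sum_range_succ' T (t + 1)]
  rw [Finset.sum_congr rfl fun k _ => hTsucc k, Finset.sum_add_distrib, hT0]
  have h2 : (∑ k ∈ Finset.range (t + 1), A (k + 1)) + A 0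
      = ∑ ν ∈ Finset.range (t + 1), A ν := by
    rw [← Finset.sum_range_succ' A (t + 1), Finset.sum_range_succ A (t + 1), hAtop, add_zero]
  rw [← h2]
  ring

def GoodFam (p m q t : ℕ) (U : Set (Fin p → ℂ)) (logf : (Fin p → ℂ) → ℂ)
    (F : ℂ → (Fin p → ℂ) → ℂ) : Prop :=
  ∃ P : ℕ → MvPolynomial (Fin p) ℂ,
    (∀ ν : ℕ, t < ν → P ν = 0) ∧
    (∀ ν : ℕ, ((q : ℤ) + m * ν - t < 0) → P ν = 0) ∧
    (∀ ν : ℕ, P ν = 0 ∨ ((P ν).totalDegree : ℤ) ≤ (q : ℤ) + m * ν - t) ∧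
    ∀ s : ℂ, ∀ x ∈ U, F s x = ∑ ν ∈ Finset.range (t + 1),
      (∏ j ∈ Finset.range ν, (s + (j : ℂ))) * eval x (P ν)
        * Complex.exp (-(s + (ν : ℂ)) * logf x)

lemma GoodFam.step (p m q t : ℕ) (f : MvPolynomial (Fin p) ℂ)
    (hf : f.totalDegree = m)
    (U : Set (Fin p → ℂ)) (hU : IsOpen U)
    (logf : (Fin p → ℂ) → ℂ) (hlog : AnalyticOnNhd ℂ logf U)
    (hexp : ∀ x ∈ U, Complex.exp (logf x) = MvPolynomial.eval x f)
    (i : Fin p) (F : ℂ → (Fin p → ℂ) → ℂ)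
    (h : GoodFam p m q t U logf F) :
    GoodFam p m q (t + 1) U logf (fun s => pderivCoord p i (F s)) := by
  obtain ⟨P, h0, h1, h2, h3⟩ := h
  obtain ⟨P', g0, g1, g2, g3⟩ := step_lemma p m q t f hf U hU logf hlog hexp i F P h0 h1 h2 h3
  exact ⟨P', g0, by push_cast at g1 ⊢; exact g1, by push_cast at g2 ⊢; exact g2, g3⟩

lemma GoodFam.iter (p m q t k : ℕ) (f : MvPolynomial (Fin p) ℂ)
    (hf : f.totalDegree = m)
    (U : Set (Fin p → ℂ)) (hU : IsOpen U)
    (logf : (Fin p → ℂ) → ℂ) (hlog : AnalyticOnNhd ℂ logf U)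
    (hexp : ∀ x ∈ U, Complex.exp (logf x) = MvPolynomial.eval x f)
    (i : Fin p) (F : ℂ → (Fin p → ℂ) → ℂ)
    (h : GoodFam p m q t U logf F) :
    GoodFam p m q (t + k) U logf (fun s => (pderivCoord p i)^[k] (F s)) := by
  induction k with
  | zero => simpa using h
  | succ k ih =>
    have := GoodFam.step p m q (t + k) f hf U hU logf hlog hexp i _ ih
    have hfun : (fun s => pderivCoord p i ((pderivCoord p i)^[k] (F s)))
        = fun s => (pderivCoord p i)^[k + 1] (F s) := by
      funext s
      rw [Function.iterate_succ_apply']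
    rw [hfun] at this
    exact this

lemma GoodFam.foldr (p m q : ℕ) (f : MvPolynomial (Fin p) ℂ)
    (hf : f.totalDegree = m)
    (U : Set (Fin p → ℂ)) (hU : IsOpen U)
    (logf : (Fin p → ℂ) → ℂ) (hlog : AnalyticOnNhd ℂ logf U)
    (hexp : ∀ x ∈ U, Complex.exp (logf x) = MvPolynomial.eval x f)
    (L : Fin p → ℕ) :
    ∀ (lst : List (Fin p)) (t : ℕ) (F : ℂ → (Fin p → ℂ) → ℂ),
      GoodFam p m q t U logf F →
      GoodFam p m q (t + (lst.map L).sum) U logf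
        (fun s => lst.foldr (fun i G => (pderivCoord p i)^[L i] G) (F s)) := by
  intro lst
  induction lst with
  | nil => intro t F h; simpa using h
  | cons i tl ih =>
    intro t F h
    have h1 := ih t F h
    have h2 := GoodFam.iter p m q (t + (tl.map L).sum) (L i) f hf U hU logf hlog hexp i _ h1
    have harith : t + ((i :: tl).map L).sum = t + (tl.map L).sum + L i := by
      simp [List.map_cons, List.sum_cons]; omega
    rw [harith]
    exact h2

/-- `∂_L (g(x) f(x)^{-s}) = ∑_{ν=0}^{|L|} (∏_{j<ν}(s+j)) P_{L,ν}(x) f(x)^{-(s+ν)}`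
with `P_{L,ν}` a polynomial independent of `s` of degree at most `q + mν − |L|`, vanishing
when `q + mν − |L| < 0`. -/
theorem stmt7 (p m q : ℕ) (f g : MvPolynomial (Fin p) ℂ)
    (hf : f.totalDegree = m) (hg : g.totalDegree = q)
    (U : Set (Fin p → ℂ)) (hU : IsOpen U)
    (logf : (Fin p → ℂ) → ℂ) (hlog : AnalyticOnNhd ℂ logf U)
    (hexp : ∀ x ∈ U, Complex.exp (logf x) = MvPolynomial.eval x f)
    (L : Fin p → ℕ) :
    ∃ P : ℕ → MvPolynomial (Fin p) ℂ,
      (∀ ν : ℕ, ((q : ℤ) + m * ν - ∑ i, L i < 0) → P ν = 0) ∧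
      (∀ ν : ℕ, P ν = 0 ∨ ((P ν).totalDegree : ℤ) ≤ (q : ℤ) + m * ν - ∑ i, L i) ∧
      ∀ (s : ℂ), ∀ x ∈ U,
        pderivMulti p L (fun y => MvPolynomial.eval y g * Complex.exp (-s * logf y)) x
          = ∑ ν ∈ Finset.range ((∑ i, L i) + 1),
              (∏ j ∈ Finset.range ν, (s + (j : ℂ))) * MvPolynomial.eval x (P ν)
                * Complex.exp (-(s + (ν : ℂ)) * logf x) := by
  classical
  -- base case
  have hbase : GoodFam p m q 0 U logf (fun s y => MvPolynomial.eval y g * Complex.exp (-s * logf y)) := by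
    refine ⟨fun ν => if ν = 0 then g else 0, ?_, ?_, ?_, ?_⟩
    · intro ν hν
      show (if ν = 0 then g else 0) = 0
      rw [if_neg (show ν ≠ 0 by omega)]
    · intro ν hν
      rcases Nat.eq_zero_or_pos ν with rfl | hν'
      · exfalso
        simp only [Nat.cast_zero, mul_zero, add_zero, sub_zero] at hν
        omega
      · show (if ν = 0 then g else 0) = 0
        rw [if_neg (show ν ≠ 0 by omega)]
    · intro ν
      rcases Nat.eq_zero_or_pos ν with rfl | hν'
      · right
        simp [hg]
      · left
        show (if ν = 0 then g else 0) = 0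
        rw [if_neg (show ν ≠ 0 by omega)]
    · intro s x hx
      rw [Finset.sum_range_one]
      simp
  have hfold := GoodFam.foldr p m q f hf U hU logf hlog hexp L (List.finRange p) 0 _ hbase
  have hsum : (0 : ℕ) + ((List.finRange p).map L).sum = ∑ i, L i := by
    rw [Fin.sum_univ_def]
    omega
  rw [hsum] at hfold
  obtain ⟨P, _, h1, h2, h3⟩ := hfold
  refine ⟨P, ?_, ?_, ?_⟩
  · intro ν hν
    exact h1 ν (by push_cast at hν ⊢; omega)
  · intro ν
    rcases h2 ν with h | h
    · exact Or.inl h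
    · right; push_cast at h ⊢; omega
  · intro s x hx
    have := h3 s x hx
    rw [← this]
    rfl
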